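/- Let Φ be a CPTP map on B¹(H) with Kraus operators (K_j)_{j∈J} (∑_j K_j*K_j = 1 strongly). Set K := ℓ²(J ∪ {s}) for a symbol s ∉ J. Then there exist a self-adjoint unitary U on H ⊗ K and the unit vector ψ = e_s such that Φ(ρ) = tr_K(U(ρ ⊗ |e_s⟩⟨e_s|)U) for all ρ ∈ B¹(H). -/

import Mathlib

open ContinuousLinearMap
open scoped ComplexInnerProductSpace ENNReal

variable {ι : Type*} [DecidableEq ι] {H : Type*} [NormedAddCommGroup H] [InnerProductSpace ℂ H]

/-- `x ↦ x ⊗ e_i`: the isometric embedding of `H` onto the `i`-th summand of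
`H ⊗ ℓ²(ι) ≅ ⊕²_ι H` (modelled as `lp (fun _ : ι => H) 2`), as a continuous linear map. -/
noncomputable def lpSingleL (i : ι) : H →L[ℂ] lp (fun _ : ι => H) 2 :=
  LinearMap.mkContinuous
    { toFun := fun x => lp.single 2 i x
      map_add' := fun x y => by
        apply lp.ext; funext j
        by_cases h : j = i
        · subst h
          simp [lp.single_apply_self, lp.coeFn_add]
        · simp [lp.single_apply_ne _ _ _ h, lp.coeFn_add]
      map_smul' := fun c x => by simp }
    1 (fun x => by
        simpa using (lp.norm_single (p := 2) (E := fun _ : ι => H) (by norm_num)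
          (fun _ => x) i).le)

/-- `(1 ⊗ ⟨e_i|)`: evaluation of the `i`-th component of `H ⊗ ℓ²(ι) ≅ ⊕²_ι H`,
as a continuous linear map. -/
noncomputable def lpProjL (i : ι) : lp (fun _ : ι => H) 2 →L[ℂ] H :=
  LinearMap.mkContinuous
    { toFun := fun f => f i
      map_add' := fun f g => by simp [lp.coeFn_add]
      map_smul' := fun c f => by simp [lp.coeFn_smul] }
    1 (fun f => by rw [one_mul]; exact lp.norm_apply_le_norm (by norm_num) f i)


section V
variable [CompleteSpace H] {J : Type*} [DecidableEq J]
variable (K : J → H →L[ℂ] H)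

private lemma rpow_two_toReal (a : ℝ) : a ^ ((2:ℝ≥0∞).toReal) = a ^ 2 := by
  rw [show ((2:ℝ≥0∞).toReal) = ((2:ℕ):ℝ) by norm_num, Real.rpow_natCast]

omit [DecidableEq J] in
private lemma krausHasSumSq (hK : ∀ x : H, HasSum (fun j => adjoint (K j) ((K j) x)) x)
    (x : H) : HasSum (fun j => ‖K j x‖ ^ 2) (‖x‖ ^ 2) := by
  have h1 : HasSum (fun j => ⟪x, adjoint (K j) ((K j) x)⟫) ⟪x, x⟫ :=
    (innerSL ℂ x).hasSum (hK x)
  have h2 : HasSum (fun j => ((‖K j x‖ ^ 2 : ℝ) : ℂ)) ((‖x‖ ^ 2 : ℝ) : ℂ) := by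
    simpa [adjoint_inner_right, inner_self_eq_norm_sq_to_K] using h1
  simpa [← Complex.ofReal_pow] using Complex.reCLM.hasSum h2

omit [DecidableEq J] in
private lemma krausHasSumSqOpt (hK : ∀ x : H, HasSum (fun j => adjoint (K j) ((K j) x)) x)
    (x : H) :
    HasSum (fun m : Option J => ‖(Option.elim m 0 fun j => K j x : H)‖ ^ 2) (‖x‖ ^ 2) := by
  refine ((Option.some_injective J).hasSum_iff ?_).mp ?_
  · rintro (_ | j) h
    · simp
    · exact absurd (Set.mem_range_self j) h
  · simpa [Function.comp_def] using krausHasSumSq K hK x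

omit [DecidableEq J] in
private lemma krausMem (hK : ∀ x : H, HasSum (fun j => adjoint (K j) ((K j) x)) x) (x : H) :
    Memℓp (fun m : Option J => (Option.elim m 0 fun j => K j x : H)) 2 := by
  apply memℓp_gen
  have := (krausHasSumSqOpt K hK x).summable
  simpa [rpow_two_toReal] using this

/-- The Stinespring isometry `x ↦ (0, (K_j x)_j)`. -/
noncomputable def krausV (hK : ∀ x : H, HasSum (fun j => adjoint (K j) ((K j) x)) x) :
    H →L[ℂ] lp (fun _ : Option J => H) 2 :=
  LinearMap.mkContinuous
    { toFun := fun x => ⟨fun m => Option.elim m 0 fun j => K j x, krausMem K hK x⟩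
      map_add' := fun x y => by
        apply lp.ext; funext m
        rcases m with _ | j <;> simp [lp.coeFn_add] <;> show (_ : H) = (_ : H) + (_ : H) <;> simp
      map_smul' := fun c x => by
        apply lp.ext; funext m
        rcases m with _ | j <;> simp [lp.coeFn_smul] }
    1 (fun x => by
      have hn : ‖(⟨fun m => Option.elim m 0 fun j => K j x, krausMem K hK x⟩ :
          lp (fun _ : Option J => H) 2)‖ ^ (2:ℝ≥0∞).toReal = ‖x‖ ^ 2 := by
        rw [lp.norm_rpow_eq_tsum (by norm_num)]
        have h := krausHasSumSqOpt K hK x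
        rw [← h.tsum_eq]
        exact tsum_congr fun m => by rw [rpow_two_toReal]
      rw [rpow_two_toReal] at hn
      show ‖(⟨fun m => Option.elim m 0 fun j => K j x, krausMem K hK x⟩ :
          lp (fun _ : Option J => H) 2)‖ ≤ 1 * ‖x‖
      have h0 : (0:ℝ) ≤ ‖x‖ := norm_nonneg x
      have h1 : (0:ℝ) ≤ ‖(⟨fun m => Option.elim m 0 fun j => K j x, krausMem K hK x⟩ :
          lp (fun _ : Option J => H) 2)‖ := norm_nonneg _
      nlinarith [hn])

omit [DecidableEq J] in
lemma krausV_apply (hK : ∀ x : H, HasSum (fun j => adjoint (K j) ((K j) x)) x)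
    (x : H) (m : Option J) :
    (krausV K hK x : ∀ _ : Option J, H) m = Option.elim m 0 fun j => K j x := rfl

end V

set_option maxHeartbeats 1000000 in
/-- Hellwig–Kraus dilation: let `Φ` be a CPTP map on `B¹(H)` with Kraus
operators `(K_j)_{j∈J}`, `∑_j K_j* K_j = 1` strongly and `Φ(ρ) = ∑_j K_j ρ K_j*`
(strongly, as expressed by `hΦ`).  Set `K := ℓ²(J ∪ {s})` for a fresh symbol `s ∉ J`
(modelled by the index type `Option J`, with `none = s`, so that
`H ⊗ K := lp (fun _ : Option J => H) 2` and `x ⊗ e_j = lp.single 2 j x`).  Then there is a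
self-adjoint unitary `U` on `H ⊗ K` (`U = U*`, `U² = 1`) such that, with the unit vector
`ψ = e_s` (index `none`), `Φ(ρ) = tr_K (U (ρ ⊗ |e_s⟩⟨e_s|) U)` for all `ρ ∈ B¹(H)`.
As in Theorem 1, `ρ ⊗ |e_s⟩⟨e_s| = lpSingleL none ∘ ρ ∘ lpProjL none` and the partial
trace identity is expressed strongly via `tr_K(A) = ∑_m (1 ⊗ ⟨e_m|) A (1 ⊗ |e_m⟩)`. -/
theorem hellwig_kraus_stinespring_form
    [CompleteSpace H] {J : Type*} [DecidableEq J]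
    (K : J → H →L[ℂ] H)
    (hK : ∀ x : H, HasSum (fun j => adjoint (K j) ((K j) x)) x)
    (Φ : (H →L[ℂ] H) →ₗ[ℂ] (H →L[ℂ] H))
    (hΦ : ∀ (ρ : H →L[ℂ] H) (x : H),
      HasSum (fun j => (K j) (ρ ((adjoint (K j)) x))) (Φ ρ x)) :
    ∃ U : lp (fun _ : Option J => H) 2 →L[ℂ] lp (fun _ : Option J => H) 2,
      star U = U ∧ U * U = 1 ∧
      ∀ (ρ : H →L[ℂ] H) (x : H),
        HasSum
          (fun m : Option J =>
            lpProjL m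
              ((U * (lpSingleL (none : Option J) ∘L ρ ∘L lpProjL (none : Option J)) * U)
                (lpSingleL m x)))
          (Φ ρ x) := by
  classical
  set V : H →L[ℂ] lp (fun _ : Option J => H) 2 := krausV K hK with hVdef
  set W : lp (fun _ : Option J => H) 2 →L[ℂ] H := adjoint V with hWdef
  set S : H →L[ℂ] lp (fun _ : Option J => H) 2 := lpSingleL (none : Option J) with hSdef
  set P : lp (fun _ : Option J => H) 2 →L[ℂ] H := lpProjL (none : Option J) with hPdef
  -- pointwise facts
  have hSapp : ∀ x : H, S x = lp.single 2 (none : Option J) x := fun _ => rfl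
  have hPapp : ∀ f : lp (fun _ : Option J => H) 2, P f = f none := fun _ => rfl
  have hVnone : ∀ x : H, (V x : ∀ _ : Option J, H) none = 0 := fun _ => rfl
  have hVsome : ∀ (x : H) (j : J), (V x : ∀ _ : Option J, H) (some j) = K j x := fun _ _ => rfl
  -- inner product identity for V
  have hinner : ∀ x y : H, ⟪V x, V y⟫ = ⟪x, y⟫ := by
    intro x y
    refine (lp.hasSum_inner (V x) (V y)).unique ?_
    refine ((Option.some_injective J).hasSum_iff ?_).mp ?_
    · rintro (_ | j) h
      · simp [hVnone]
      · exact absurd (Set.mem_range_self j) h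
    · have h1 : HasSum (fun j => ⟪x, adjoint (K j) ((K j) y)⟫) ⟪x, y⟫ :=
        (innerSL ℂ x).hasSum (hK y)
      simpa [adjoint_inner_right, hVsome, Function.comp_def] using h1
  -- adjoint evaluations
  have hW_none : ∀ x : H, W (lp.single 2 (none : Option J) x) = 0 := by
    intro x
    refine ext_inner_left ℂ fun w => ?_
    rw [hWdef, adjoint_inner_right, lp.inner_single_right, hVnone]
    simp
  have hW_some : ∀ (j : J) (x : H), W (lp.single 2 (some j : Option J) x) = adjoint (K j) x := by
    intro j x
    refine ext_inner_left ℂ fun w => ?_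
    rw [hWdef, adjoint_inner_right, lp.inner_single_right, hVsome, adjoint_inner_right]
  -- operator identities
  have hPS : P ∘L S = 1 := by
    ext x
    simp [hPapp, hSapp, lp.single_apply_self]
  have hPV : P ∘L V = 0 := by
    ext x
    simp [hPapp, hVnone]
  have hWS : W ∘L S = 0 := by
    ext x
    simp [hSapp, hW_none]
  have hWV : W ∘L V = 1 := by
    ext x
    refine ext_inner_left ℂ fun w => ?_
    rw [comp_apply, hWdef, adjoint_inner_right, hinner]
    simp
  have hSadj : adjoint S = P := by
    symm
    rw [eq_adjoint_iff]
    intro f y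
    rw [hPapp, hSapp, lp.inner_single_right]
  have hPadj : adjoint P = S := by rw [← hSadj, adjoint_adjoint]
  have h1adj : adjoint (1 : lp (fun _ : Option J => H) 2 →L[ℂ] lp (fun _ : Option J => H) 2) = 1 :=
    ((eq_adjoint_iff 1 1).mpr (fun x y => by simp)).symm
  -- the unitary
  set U : lp (fun _ : Option J => H) 2 →L[ℂ] lp (fun _ : Option J => H) 2 :=
    S ∘L W + V ∘L P + 1 - S ∘L P - V ∘L W with hUdef
  refine ⟨U, ?_, ?_, ?_⟩
  · -- self-adjoint
    rw [star_eq_adjoint, hUdef]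
    simp only [map_sub, map_add]
    rw [adjoint_comp, adjoint_comp, adjoint_comp, adjoint_comp, adjoint_adjoint, ← hWdef,
      hSadj, hPadj, h1adj]
    abel
  · -- involution
    have h1' : ∀ r : lp (fun _ : Option J => H) 2 →L[ℂ] H, P ∘L (S ∘L r) = r := by
      intro r; rw [← comp_assoc, hPS, one_def, id_comp]
    have h2' : ∀ r : lp (fun _ : Option J => H) 2 →L[ℂ] H, P ∘L (V ∘L r) = 0 := by
      intro r; rw [← comp_assoc, hPV, zero_comp]
    have h3' : ∀ r : lp (fun _ : Option J => H) 2 →L[ℂ] H, W ∘L (S ∘L r) = 0 := by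
      intro r; rw [← comp_assoc, hWS, zero_comp]
    have h4' : ∀ r : lp (fun _ : Option J => H) 2 →L[ℂ] H, W ∘L (V ∘L r) = r := by
      intro r; rw [← comp_assoc, hWV, one_def, id_comp]
    have hab : (S ∘L W) * (V ∘L P) = S ∘L P := by rw [mul_def, comp_assoc, h4']
    have haa : (S ∘L W) * (S ∘L W) = 0 := by rw [mul_def, comp_assoc, h3', comp_zero]
    have hae : (S ∘L W) * (S ∘L P) = 0 := by rw [mul_def, comp_assoc, h3', comp_zero]
    have haq : (S ∘L W) * (V ∘L W) = S ∘L W := by rw [mul_def, comp_assoc, h4']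
    have hba : (V ∘L P) * (S ∘L W) = V ∘L W := by rw [mul_def, comp_assoc, h1']
    have hbb : (V ∘L P) * (V ∘L P) = 0 := by rw [mul_def, comp_assoc, h2', comp_zero]
    have hbe : (V ∘L P) * (S ∘L P) = V ∘L P := by rw [mul_def, comp_assoc, h1']
    have hbq : (V ∘L P) * (V ∘L W) = 0 := by rw [mul_def, comp_assoc, h2', comp_zero]
    have hea : (S ∘L P) * (S ∘L W) = S ∘L W := by rw [mul_def, comp_assoc, h1']
    have heb : (S ∘L P) * (V ∘L P) = 0 := by rw [mul_def, comp_assoc, h2', comp_zero]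
    have hee : (S ∘L P) * (S ∘L P) = S ∘L P := by rw [mul_def, comp_assoc, h1']
    have heq : (S ∘L P) * (V ∘L W) = 0 := by rw [mul_def, comp_assoc, h2', comp_zero]
    have hqa : (V ∘L W) * (S ∘L W) = 0 := by rw [mul_def, comp_assoc, h3', comp_zero]
    have hqb : (V ∘L W) * (V ∘L P) = V ∘L P := by rw [mul_def, comp_assoc, h4']
    have hqe : (V ∘L W) * (S ∘L P) = 0 := by rw [mul_def, comp_assoc, h3', comp_zero]
    have hqq : (V ∘L W) * (V ∘L W) = V ∘L W := by rw [mul_def, comp_assoc, h4']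
    rw [hUdef]
    simp only [mul_add, add_mul, mul_sub, sub_mul, mul_one, one_mul,
      hab, haa, hae, haq, hba, hbb, hbe, hbq, hea, heb, hee, heq, hqa, hqb, hqe, hqq]
    abel
  · -- the dilation identity
    have hPS' : ∀ y : H, P (S y) = y := fun y => by
      rw [hPapp, hSapp, lp.single_apply_self]
    have hPV' : ∀ y : H, P (V y) = 0 := fun y => hVnone y
    have hWS' : ∀ y : H, W (S y) = 0 := fun y => hW_none y
    have hUS : ∀ x : H, U (lp.single 2 (none : Option J) x) = V x := by
      intro x
      have e1 : lp.single 2 (none : Option J) x = S x := rfl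
      rw [e1, hUdef]
      simp only [sub_apply, add_apply, comp_apply, one_apply_eq_self, hWS', hPS', map_zero]
      abel
    have hPU_some : ∀ (j : J) (x : H),
        P (U (lp.single 2 (some j : Option J) x)) = adjoint (K j) x := by
      intro j x
      have h1 : W (lp.single 2 (some j : Option J) x) = adjoint (K j) x := hW_some j x
      have h2 : P (lp.single 2 (some j : Option J) x) = 0 := by
        rw [hPapp]
        exact lp.single_apply_ne (E := fun _ : Option J => H) 2 (some j) x
          (show (none : Option J) ≠ some j by simp)
      rw [hUdef]
      simp only [sub_apply, add_apply, comp_apply, one_apply_eq_self, map_sub, map_add,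
        h1, h2, hPS', hPV', map_zero]
      abel
    intro ρ x
    refine ((Option.some_injective J).hasSum_iff ?_).mp ?_
    · rintro (_ | j) hm
      · show lpProjL (none : Option J)
          ((U * (lpSingleL (none : Option J) ∘L ρ ∘L lpProjL (none : Option J)) * U)
            (lpSingleL (none : Option J) x)) = 0
        rw [mul_apply_eq_comp, mul_apply_eq_comp]
        rw [show lpSingleL (none : Option J) x = lp.single 2 (none : Option J) x from rfl, hUS]
        rw [comp_apply, comp_apply]
        rw [show lpProjL (none : Option J) (V x) = (0 : H) from hVnone x]
        simp
      · exact absurd (Set.mem_range_self j) hm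
    · have key : ∀ j : J,
          lpProjL (some j : Option J)
            ((U * (lpSingleL (none : Option J) ∘L ρ ∘L lpProjL (none : Option J)) * U)
              (lpSingleL (some j : Option J) x)) = K j (ρ (adjoint (K j) x)) := by
        intro j
        rw [mul_apply_eq_comp, mul_apply_eq_comp]
        rw [show lpSingleL (some j : Option J) x = lp.single 2 (some j : Option J) x from rfl]
        rw [comp_apply, comp_apply]
        rw [show lpProjL (none : Option J) (U (lp.single 2 (some j : Option J) x)) =
          adjoint (K j) x from hPU_some j x]
        rw [show lpSingleL (none : Option J) (ρ (adjoint (K j) x)) =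
          lp.single 2 (none : Option J) (ρ (adjoint (K j) x)) from rfl, hUS]
        exact hVsome _ j
      refine (hΦ ρ x).congr_fun fun j => ?_
      simpa using key j
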